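/- Let Ω be an infinite set, A a partition of Ω, G = S_(A) ≤ Sym(Ω), and κ an infinite regular cardinal ≤ |Ω|. Then: (a) if some member of A has cardinality ≥ κ, there is no κ-uncrowded generalized metric on Ω with respect to which all elements of G are bounded; (b) if all members of A have cardinality < κ but there is no common bound λ < κ for these cardinalities, then there is a κ-uncrowded generalized metric on Ω with respect to which all elements of G are bounded, but no uniformly κ-uncrowded generalized metric with this property; (c) if all members of A have cardinality ≤ λ for some λ < κ, then there is a uniformly κ-uncrowded generalized metric on Ω with respect to which all elements of G are bounded. -/

import Mathlib

open scoped Cardinal ENNReal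

universe u

variable {Ω : Type u}

/-- The pointwise stabilizer of a set `s` inside a subgroup `G` of `Sym(Ω)`. -/
def pstab (G : Subgroup (Equiv.Perm Ω)) (s : Set Ω) : Subgroup (Equiv.Perm Ω) where
  carrier := {g | g ∈ G ∧ ∀ x ∈ s, g x = x}
  one_mem' := ⟨G.one_mem, fun _ _ => rfl⟩
  mul_mem' := by
    rintro a b ⟨haG, ha⟩ ⟨hbG, hb⟩
    refine ⟨G.mul_mem haG hbG, fun x hx => ?_⟩
    simp [Equiv.Perm.mul_apply, hb x hx, ha x hx]
  inv_mem' := by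
    rintro a ⟨haG, ha⟩
    refine ⟨G.inv_mem haG, fun x hx => ?_⟩
    conv_lhs => rw [← ha x hx]
    exact Equiv.symm_apply_apply a x

/-- For a family `A` of subsets of `Ω`, the subgroup of permutations carrying each
member of `A` onto itself. -/
def SAgrp (A : Set (Set Ω)) : Subgroup (Equiv.Perm Ω) where
  carrier := {f | ∀ s ∈ A, (f : Ω → Ω) '' s = s}
  one_mem' := fun s _ => by simp
  mul_mem' := by
    intro a b ha hb s hs
    rw [Equiv.Perm.coe_mul, Set.image_comp, hb s hs, ha s hs]
  inv_mem' := by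
    intro a ha s hs
    conv_lhs => rw [← ha s hs]
    rw [← Set.image_comp]
    simp

/-- `G₁ ≼_κ G₂` : there is a set `U` of permutations of cardinality `< κ` with
`G₁ ≤ ⟨G₂ ∪ U⟩`. -/
def Prec (κ : Cardinal.{u}) (G₁ G₂ : Subgroup (Equiv.Perm Ω)) : Prop :=
  ∃ U : Set (Equiv.Perm Ω), #U < κ ∧
    G₁ ≤ Subgroup.closure ((G₂ : Set (Equiv.Perm Ω)) ∪ U)

/-- `G₁ ≈_κ G₂`. -/
def CApprox (κ : Cardinal.{u}) (G₁ G₂ : Subgroup (Equiv.Perm Ω)) : Prop :=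
  Prec κ G₁ G₂ ∧ Prec κ G₂ G₁

/-- `G₁ ≼ G₂` (i.e. `≼_{ℵ₀}`, with `U` finite). -/
def PrecF (G₁ G₂ : Subgroup (Equiv.Perm Ω)) : Prop :=
  ∃ U : Set (Equiv.Perm Ω), U.Finite ∧
    G₁ ≤ Subgroup.closure ((G₂ : Set (Equiv.Perm Ω)) ∪ U)

/-- `G₁ ≈ G₂` (i.e. `≈_{ℵ₀}`). -/
def ApproxF (G₁ G₂ : Subgroup (Equiv.Perm Ω)) : Prop :=
  PrecF G₁ G₂ ∧ PrecF G₂ G₁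

/-- A generalized metric: a `[0,∞]`-valued metric. -/
structure IsGenMetric (d : Ω → Ω → ℝ≥0∞) : Prop where
  eq_zero_iff : ∀ α β, d α β = 0 ↔ α = β
  symm : ∀ α β, d α β = d β α
  triangle : ∀ α β γ, d α γ ≤ d α β + d β γ

/-- Open ball for a generalized metric. -/
def gball (d : Ω → Ω → ℝ≥0∞) (α : Ω) (r : ℝ≥0∞) : Set Ω := {β | d α β < r}

/-- `(Ω, d)` is `κ`-uncrowded: every ball of finite radius has `< κ` elements. -/
def Uncrowded (κ : Cardinal.{u}) (d : Ω → Ω → ℝ≥0∞) : Prop :=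
  ∀ (α : Ω) (r : ℝ≥0∞), r < ⊤ → #(gball d α r) < κ

/-- `(Ω, d)` is uniformly `κ`-uncrowded. -/
def UnifUncrowded (κ : Cardinal.{u}) (d : Ω → Ω → ℝ≥0∞) : Prop :=
  ∀ r : ℝ≥0∞, r < ⊤ → ∃ lam : Cardinal.{u}, lam < κ ∧ ∀ α : Ω, #(gball d α r) ≤ lam

/-- `g` is bounded with respect to `d` : `‖g‖_d = ⨆ α, d α (αg) < ∞`. -/
def BoundedPerm (d : Ω → Ω → ℝ≥0∞) (g : Equiv.Perm Ω) : Prop :=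
  (⨆ α : Ω, d α (g α)) < ⊤

/-- The function topology on `Sym(Ω)`: induced from the product topology on `Ω → Ω`
with `Ω` discrete. -/
def permTop (Ω : Type u) : TopologicalSpace (Equiv.Perm Ω) :=
  TopologicalSpace.induced (fun g : Equiv.Perm Ω => (g : Ω → Ω))
    (@Pi.topologicalSpace Ω (fun _ => Ω) (fun _ => ⊥))

/-- `G` is closed in `Sym(Ω)` in the function topology. -/
def FTClosed (G : Subgroup (Equiv.Perm Ω)) : Prop :=
  @IsClosed _ (permTop Ω) (G : Set (Equiv.Perm Ω))

/-- `G` is discrete in the function topology. -/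
def FTDiscrete (G : Subgroup (Equiv.Perm Ω)) : Prop :=
  @DiscreteTopology G
    (TopologicalSpace.induced (fun x : G => (x : Equiv.Perm Ω)) (permTop Ω))

/-- The orbit of `α` under a subgroup `H ≤ Sym(Ω)`. -/
def orb (H : Subgroup (Equiv.Perm Ω)) (α : Ω) : Set Ω := {β | ∃ g ∈ H, g α = β}

/-- A partition of `Ω`: a set of disjoint nonempty subsets with union `Ω`. -/
def IsPartition (A : Set (Set Ω)) : Prop :=
  (∀ s ∈ A, s.Nonempty) ∧ A.PairwiseDisjoint id ∧ ⋃₀ A = Set.univ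

/-- `A ∈ 𝒫`: a partition of `Ω` into finite subsets of unbounded cardinality. -/
def MemP (A : Set (Set Ω)) : Prop :=
  IsPartition A ∧ (∀ s ∈ A, s.Finite) ∧ ∀ n : ℕ, ∃ s ∈ A, (n : ℕ∞) < s.encard

/-- `A ∈ 𝒬`: a partition of `Ω` with a common finite bound on the cardinalities of
its members, infinitely many of which have more than one element. -/
def MemQ (A : Set (Set Ω)) : Prop :=
  IsPartition A ∧ (∃ n : ℕ, ∀ s ∈ A, s.encard ≤ (n : ℕ∞)) ∧
    {s | s ∈ A ∧ 1 < s.encard}.Infinite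

/-- The subgroup `FN(Ω,d)` of permutations of finite norm with respect to a
generalized metric `d`. -/
def FN (d : Ω → Ω → ℝ≥0∞) (hd : IsGenMetric d) : Subgroup (Equiv.Perm Ω) where
  carrier := {g | (⨆ α : Ω, d α (g α)) < ⊤}
  one_mem' := by
    have h : (⨆ α : Ω, d α ((1 : Equiv.Perm Ω) α)) ≤ 0 :=
      iSup_le fun α => le_of_eq ((hd.eq_zero_iff α ((1 : Equiv.Perm Ω) α)).2 rfl)
    exact lt_of_le_of_lt h (by simp)
  mul_mem' := by
    intro a b ha hb
    have h : (⨆ α : Ω, d α ((a * b) α)) ≤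
        (⨆ α : Ω, d α (b α)) + (⨆ α : Ω, d α (a α)) := by
      refine iSup_le fun α => ?_
      calc d α ((a * b) α) = d α (a (b α)) := by rw [Equiv.Perm.mul_apply]
        _ ≤ d α (b α) + d (b α) (a (b α)) := hd.triangle _ _ _
        _ ≤ _ := add_le_add (le_iSup (fun α : Ω => d α (b α)) α)
              (le_iSup (fun β : Ω => d β (a β)) (b α))
    exact lt_of_le_of_lt h (ENNReal.add_lt_top.2 ⟨hb, ha⟩)
  inv_mem' := by
    intro a ha
    have h : (⨆ α : Ω, d α (a⁻¹ α)) ≤ ⨆ β : Ω, d β (a β) := by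
      refine iSup_le fun α => ?_
      have e : d α (a⁻¹ α) = d (a⁻¹ α) (a (a⁻¹ α)) := by
        rw [← Equiv.Perm.mul_apply, mul_inv_cancel, Equiv.Perm.one_apply]; exact hd.symm _ _
      rw [e]
      exact le_iSup (fun β : Ω => d β (a β)) (a⁻¹ α)
    exact lt_of_le_of_lt h ha


/-! ### Auxiliary lemmas -/

section Aux

variable {A : Set (Set Ω)}

lemma block_unique (hA : IsPartition A) {s t : Set Ω} (hs : s ∈ A) (ht : t ∈ A)
    {x : Ω} (hxs : x ∈ s) (hxt : x ∈ t) : s = t := by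
  by_contra h
  exact Set.disjoint_left.1 (hA.2.1 hs ht h) hxs hxt

lemma exists_block (hA : IsPartition A) (x : Ω) : ∃ s ∈ A, x ∈ s := by
  have hx : x ∈ ⋃₀ A := by rw [hA.2.2]; trivial
  exact Set.mem_sUnion.1 hx

lemma mem_SAgrp (hA : IsPartition A) (g : Equiv.Perm Ω)
    (h : ∀ x : Ω, g x = x ∨ ∃ s ∈ A, x ∈ s ∧ g x ∈ s) : g ∈ SAgrp A := by
  intro t ht
  apply Set.Subset.antisymm
  · rintro y ⟨x, hx, rfl⟩
    rcases h x with h1 | ⟨s, hs, hxs, hgs⟩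
    · rwa [h1]
    · rwa [block_unique hA hs ht hxs hx] at hgs
  · intro y hy
    have hinv : g (g⁻¹ y) = y := g.apply_symm_apply y
    rcases h (g⁻¹ y) with h1 | ⟨s, hs, hxs, hgs⟩
    · have e : g⁻¹ y = y := h1.symm.trans hinv
      exact ⟨g⁻¹ y, by rw [e]; exact hy, hinv⟩
    · rw [hinv] at hgs
      have e : s = t := block_unique hA hs ht hgs hy
      exact ⟨g⁻¹ y, by rw [← e]; exact hxs, hinv⟩

lemma dist_lt_top {d : Ω → Ω → ℝ≥0∞} (hd : IsGenMetric d) (hA : IsPartition A)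
    (hb : ∀ g ∈ SAgrp A, BoundedPerm d g) {s : Set Ω} (hs : s ∈ A)
    {x y : Ω} (hx : x ∈ s) (hy : y ∈ s) : d x y < ⊤ := by
  classical
  rcases eq_or_ne x y with rfl | hne
  · rw [(hd.eq_zero_iff x x).2 rfl]; exact ENNReal.zero_lt_top
  · have hg : Equiv.swap x y ∈ SAgrp A := by
      apply mem_SAgrp hA
      intro z
      rcases eq_or_ne z x with rfl | hzx
      · exact Or.inr ⟨s, hs, hx, by rw [Equiv.swap_apply_left]; exact hy⟩
      rcases eq_or_ne z y with rfl | hzy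
      · exact Or.inr ⟨s, hs, hy, by rw [Equiv.swap_apply_right]; exact hx⟩
      · exact Or.inl (Equiv.swap_apply_of_ne_of_ne hzx hzy)
    have hbd := hb _ hg
    calc d x y = d x (Equiv.swap x y x) := by rw [Equiv.swap_apply_left]
      _ ≤ ⨆ α, d α (Equiv.swap x y α) := le_iSup (fun α => d α (Equiv.swap x y α)) x
      _ < ⊤ := hbd

/-- The involution on `ℕ × Bool` flipping the boolean. -/
def flipPerm : Equiv.Perm (ℕ × Bool) :=
  Function.Involutive.toPerm (fun p => (p.1, !p.2)) (by intro p; simp)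

lemma flipPerm_apply (p : ℕ × Bool) : flipPerm p = (p.1, !p.2) := rfl

/-- Part (a). -/
lemma partA {d : Ω → Ω → ℝ≥0∞} (hd : IsGenMetric d) (hA : IsPartition A)
    {κ : Cardinal.{u}} (hunc : Uncrowded κ d)
    (hb : ∀ g ∈ SAgrp A, BoundedPerm d g) {s : Set Ω} (hs : s ∈ A) (hκs : κ ≤ #s) :
    False := by
  obtain ⟨α, hα⟩ := hA.1 s hs
  have dlt : ∀ y ∈ s, d α y < ⊤ := fun y hy => dist_lt_top hd hA hb hs hα hy
  have key : ∀ (R : ℝ≥0∞), R < ⊤ → ∃ y, y ∈ s ∧ R < d α y := by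
    intro R hR
    by_contra h
    push_neg at h
    have hsub : s ⊆ gball d α (R + 1) := fun y hy =>
      lt_of_le_of_lt (h y hy) (ENNReal.lt_add_right hR.ne one_ne_zero)
    have h2 := hunc α (R + 1) (ENNReal.add_lt_top.2 ⟨hR, ENNReal.one_lt_top⟩)
    exact absurd (hκs.trans (Cardinal.mk_le_mk_of_subset hsub)) h2.not_ge
  choose F hF1 hF2 using fun (k : ℕ) (b : {y : Ω // y ∈ s}) =>
    key (d α b + ((k : ℝ≥0∞) + 1))
      (ENNReal.add_lt_top.2 ⟨dlt b b.2,
        ENNReal.add_lt_top.2 ⟨ENNReal.natCast_lt_top k, ENNReal.one_lt_top⟩⟩)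
  let f : ℕ → {y : Ω // y ∈ s} := fun k =>
    Nat.rec ⟨α, hα⟩ (fun k p => ⟨F k p, hF1 k p⟩) k
  have hfk : ∀ k : ℕ, (f (k + 1)).1 = F k (f k) := fun k => rfl
  have hstep : ∀ k : ℕ, d α (f k).1 + ((k : ℝ≥0∞) + 1) < d α (f (k + 1)).1 := by
    intro k
    rw [hfk k]
    exact hF2 k (f k)
  have hmono : StrictMono (fun k => d α (f k).1) := by
    apply strictMono_nat_of_lt_succ
    intro k
    exact lt_of_le_of_lt le_self_add (hstep k)
  have hfinj : Function.Injective (fun k : ℕ => (f k).1) := by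
    intro a b hab
    by_contra hne
    rcases lt_or_gt_of_ne hne with hlt | hlt
    · exact absurd (congrArg (d α) hab) (hmono hlt).ne
    · exact absurd (congrArg (d α) hab) (hmono hlt).ne'

  -- the permutation swapping `f (2n)` with `f (2n+1)`
  let u : ℕ × Bool ↪ Ω :=
    ⟨fun p => (f (2 * p.1 + cond p.2 1 0)).1, by
      rintro ⟨n, x⟩ ⟨m, y⟩ h
      have h2 : 2 * n + cond x 1 0 = 2 * m + cond y 1 0 := hfinj h
      cases x <;> cases y <;>
          simp only [Bool.cond_true, Bool.cond_false] at h2 <;>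
          simp only [Prod.mk.injEq]
      · exact ⟨by omega, trivial⟩
      · exact absurd h2 (by omega)
      · exact absurd h2 (by omega)
      · exact ⟨by omega, trivial⟩⟩
  have humem : ∀ p : ℕ × Bool, u p ∈ s := fun p => (f _).2
  let g : Equiv.Perm Ω := flipPerm.viaEmbedding u
  have hgu : ∀ p : ℕ × Bool, g (u p) = u (flipPerm p) :=
    fun p => flipPerm.viaEmbedding_apply u p
  have hg : g ∈ SAgrp A := by
    apply mem_SAgrp hA
    intro x
    by_cases hx : x ∈ Set.range u
    · obtain ⟨p, rfl⟩ := hx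
      exact Or.inr ⟨s, hs, humem p, by rw [hgu p]; exact humem _⟩
    · exact Or.inl (flipPerm.viaEmbedding_apply_of_notMem u x hx)
  have hbg := hb g hg
  obtain ⟨n, hn⟩ := ENNReal.exists_nat_gt hbg.ne
  have hd1 : ((2 * n : ℕ) : ℝ≥0∞) + 1 < d (f (2 * n)).1 (f (2 * n + 1)).1 := by
    have htri : d α (f (2 * n + 1)).1 ≤ d α (f (2 * n)).1 + d (f (2 * n)).1 (f (2 * n + 1)).1 :=
      hd.triangle _ _ _
    have h3 := lt_of_lt_of_le (hstep (2 * n)) htri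
    exact (ENNReal.add_lt_add_iff_left (dlt _ (f (2 * n)).2).ne).1 h3
  have hdisp : d (u (n, false)) (g (u (n, false))) = d (f (2 * n)).1 (f (2 * n + 1)).1 := by
    rw [hgu (n, false), flipPerm_apply]
    rfl
  have hle : (n : ℝ≥0∞) ≤ d (u (n, false)) (g (u (n, false))) := by
    rw [hdisp]
    refine le_trans ?_ hd1.le
    calc (n : ℝ≥0∞) ≤ ((2 * n : ℕ) : ℝ≥0∞) :=
          Nat.cast_le.2 (Nat.le_mul_of_pos_left n (by norm_num))
      _ ≤ _ := le_self_add
  exact absurd (hle.trans (le_iSup (fun β => d β (g β)) (u (n, false)))) hn.not_ge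

/-! The canonical metric attached to a partition. -/

open Classical in
noncomputable def dA (A : Set (Set Ω)) : Ω → Ω → ℝ≥0∞ :=
  fun x y => if x = y then 0 else if ∃ s ∈ A, x ∈ s ∧ y ∈ s then 1 else ⊤

lemma dA_self (A : Set (Set Ω)) (x : Ω) : dA A x x = 0 := by
  simp [dA]

lemma dA_of_block {s : Set Ω} (hs : s ∈ A) {x y : Ω} (hxy : x ≠ y)
    (hx : x ∈ s) (hy : y ∈ s) : dA A x y = 1 := by
  simp only [dA]
  rw [if_neg hxy, if_pos ⟨s, hs, hx, hy⟩]

lemma dA_of_not_block {x y : Ω} (hxy : x ≠ y) (h : ¬∃ s ∈ A, x ∈ s ∧ y ∈ s) :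
    dA A x y = ⊤ := by
  simp only [dA]
  rw [if_neg hxy, if_neg h]

lemma one_le_dA {x y : Ω} (hxy : x ≠ y) : 1 ≤ dA A x y := by
  simp only [dA]
  rw [if_neg hxy]
  split
  · exact le_refl 1
  · exact le_top

lemma dA_isGenMetric (hA : IsPartition A) : IsGenMetric (dA A) := by
  constructor
  · intro x y
    constructor
    · intro h
      by_contra hxy
      exact absurd (h ▸ one_le_dA hxy) (by simp)
    · rintro rfl; exact dA_self A x
  · intro x y
    rcases eq_or_ne x y with rfl | h
    · rfl
    · by_cases hc : ∃ s ∈ A, x ∈ s ∧ y ∈ s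
      · obtain ⟨s, hs, hx, hy⟩ := hc
        rw [dA_of_block hs h hx hy, dA_of_block hs h.symm hy hx]
      · have hc' : ¬∃ s ∈ A, y ∈ s ∧ x ∈ s :=
          fun ⟨s, hs, h1, h2⟩ => hc ⟨s, hs, h2, h1⟩
        rw [dA_of_not_block h hc, dA_of_not_block h.symm hc']
  · intro x y z
    rcases eq_or_ne x z with rfl | hxz
    · rw [dA_self]; exact zero_le
    rcases eq_or_ne x y with rfl | hxy
    · rw [dA_self, zero_add]
    rcases eq_or_ne y z with rfl | hyz
    · rw [dA_self, add_zero]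
    by_cases hc : ∃ s ∈ A, x ∈ s ∧ z ∈ s
    · obtain ⟨s, hs, hx, hz⟩ := hc
      rw [dA_of_block hs hxz hx hz]
      exact le_trans (one_le_dA hxy) le_self_add
    · rw [dA_of_not_block hxz hc]
      obtain ⟨t, ht, hyt⟩ := exists_block hA y
      by_cases hxt : x ∈ t
      · have hzt : z ∉ t := fun hzt => hc ⟨t, ht, hxt, hzt⟩
        have : dA A y z = ⊤ := by
          apply dA_of_not_block hyz
          rintro ⟨s, hs, h1, h2⟩
          exact hzt ((block_unique hA hs ht h1 hyt) ▸ h2)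
        rw [this]
        simp
      · have : dA A x y = ⊤ := by
          apply dA_of_not_block hxy
          rintro ⟨s, hs, h1, h2⟩
          exact hxt ((block_unique hA hs ht h2 hyt) ▸ h1)
        rw [this]
        simp

lemma gball_dA_subset (hA : IsPartition A) {t : Set Ω} (ht : t ∈ A) {x : Ω}
    (hx : x ∈ t) {r : ℝ≥0∞} (hr : r < ⊤) : gball (dA A) x r ⊆ t := by
  intro y hy
  have hlt : dA A x y < ⊤ := lt_of_lt_of_le hy hr.le
  rcases eq_or_ne x y with rfl | hxy
  · exact hx
  by_cases hc : ∃ s ∈ A, x ∈ s ∧ y ∈ s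
  · obtain ⟨s, hs, h1, h2⟩ := hc
    exact (block_unique hA hs ht h1 hx) ▸ h2
  · rw [dA_of_not_block hxy hc] at hlt
    exact absurd hlt (lt_irrefl _)

lemma dA_bounded (hA : IsPartition A) {g : Equiv.Perm Ω} (hg : g ∈ SAgrp A) :
    BoundedPerm (dA A) g := by
  have hsup : (⨆ α : Ω, dA A α (g α)) ≤ 1 := by
    refine iSup_le fun x => ?_
    obtain ⟨s, hs, hx⟩ := exists_block hA x
    have hgx : g x ∈ s := by
      rw [← hg s hs]
      exact ⟨x, hx, rfl⟩
    rcases eq_or_ne x (g x) with he | hne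
    · rw [← he, dA_self]; exact zero_le
    · rw [dA_of_block hs hne hx hgx]
  exact lt_of_le_of_lt hsup ENNReal.one_lt_top

/-- Part (b), second half. -/
lemma partB2 {d : Ω → Ω → ℝ≥0∞} (hd : IsGenMetric d) (hA : IsPartition A)
    {κ : Cardinal.{u}} (hlt : ∀ s ∈ A, #s < κ)
    (hnb : ¬∃ lam : Cardinal.{u}, lam < κ ∧ ∀ s ∈ A, #s ≤ lam)
    (hu : UnifUncrowded κ d) (hb : ∀ g ∈ SAgrp A, BoundedPerm d g) : False := by
  push_neg at hnb
  have hex : ∀ lam : Cardinal.{u}, lam < κ → ∃ s ∈ A, lam < #s := by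
    intro lam hlam
    obtain ⟨s, hs, h⟩ := hnb lam hlam
    exact ⟨s, hs, h⟩
  choose μ hμ1 hμ2 using fun n : ℕ =>
    hu ((n : ℝ≥0∞) + 1)
      (ENNReal.add_lt_top.2 ⟨ENNReal.natCast_lt_top n, ENNReal.one_lt_top⟩)
  -- recursively pick blocks of strictly increasing cardinality
  have step : ∀ (n : ℕ) (t : {s : Set Ω // s ∈ A}),
      ∃ s, s ∈ A ∧ #t.1 ⊔ μ n < #s := by
    intro n t
    obtain ⟨s, hs, h⟩ := hex (#t.1 ⊔ μ n) (max_lt (hlt _ t.2) (hμ1 n))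
    exact ⟨s, hs, h⟩
  choose G hG1 hG2 using step
  obtain ⟨s0, hs0, hs0'⟩ := hex (μ 0) (hμ1 0)
  let f : ℕ → {s : Set Ω // s ∈ A} := fun n =>
    Nat.rec ⟨s0, hs0⟩ (fun n t => ⟨G (n + 1) t, hG1 (n + 1) t⟩) n
  have hμf : ∀ n : ℕ, μ n < #(f n).1 := by
    intro n
    cases n with
    | zero => exact hs0'
    | succ m => exact lt_of_le_of_lt le_sup_right (hG2 (m + 1) (f m))
  have hcard : StrictMono (fun n => #(f n).1) := by
    apply strictMono_nat_of_lt_succ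
    intro n
    exact lt_of_le_of_lt le_sup_left (hG2 (n + 1) (f n))
  have hfne : ∀ {m n : ℕ}, m ≠ n → (f m).1 ≠ (f n).1 := by
    intro m n hmn he
    rcases lt_or_gt_of_ne hmn with h | h
    · exact absurd (congrArg (fun t : Set Ω => #t) he) (hcard h).ne
    · exact absurd (congrArg (fun t : Set Ω => #t) he) (hcard h).ne'
  -- pick points α n, β n in block f n with d (α n) (β n) ≥ n + 1
  have hα : ∀ n : ℕ, ∃ a, a ∈ (f n).1 := fun n => hA.1 _ (f n).2
  choose a ha using hα
  have hβ : ∀ n : ℕ, ∃ y, y ∈ (f n).1 ∧ ¬ d (a n) y < (n : ℝ≥0∞) + 1 := by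
    intro n
    by_contra h
    push_neg at h
    have hsub : (f n).1 ⊆ gball d (a n) ((n : ℝ≥0∞) + 1) := fun y hy => h y hy
    exact absurd ((Cardinal.mk_le_mk_of_subset hsub).trans (hμ2 n (a n))) (hμf n).not_ge
  choose b hb1 hb2 using hβ
  have hdab : ∀ n : ℕ, (n : ℝ≥0∞) + 1 ≤ d (a n) (b n) := fun n => not_lt.1 (hb2 n)
  have hab : ∀ n : ℕ, a n ≠ b n := by
    intro n he
    have h0 : d (a n) (b n) = 0 := (hd.eq_zero_iff _ _).2 he
    have := hdab n
    rw [h0] at this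
    exact absurd this (by simp)
  let u : ℕ × Bool ↪ Ω :=
    ⟨fun p => cond p.2 (b p.1) (a p.1), by
      rintro ⟨n, x⟩ ⟨m, y⟩ h
      have hmem1 : cond x (b n) (a n) ∈ (f n).1 := by
        cases x
        · exact ha n
        · exact hb1 n
      have hmem2 : cond y (b m) (a m) ∈ (f m).1 := by
        cases y
        · exact ha m
        · exact hb1 m
      rcases eq_or_ne n m with rfl | hnm
      · have hxy : x = y := by
          cases x <;> cases y
          · rfl
          · exact absurd (show a n = b n from h) (hab n)
          · exact absurd (show a n = b n from h.symm) (hab n)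
          · rfl
        rw [hxy]
      · exfalso
        rw [show (cond x (b n) (a n) : Ω) = cond y (b m) (a m) from h] at hmem1
        exact Set.disjoint_left.1 (hA.2.1 (f n).2 (f m).2 (hfne hnm)) hmem1 hmem2⟩
  have humem : ∀ p : ℕ × Bool, u p ∈ (f p.1).1 := by
    intro ⟨n, x⟩
    cases x <;> [exact ha n; exact hb1 n]
  let g : Equiv.Perm Ω := flipPerm.viaEmbedding u
  have hgu : ∀ p : ℕ × Bool, g (u p) = u (flipPerm p) :=
    fun p => flipPerm.viaEmbedding_apply u p
  have hg : g ∈ SAgrp A := by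
    apply mem_SAgrp hA
    intro x
    by_cases hx : x ∈ Set.range u
    · obtain ⟨p, rfl⟩ := hx
      refine Or.inr ⟨(f p.1).1, (f p.1).2, humem p, ?_⟩
      rw [hgu p, flipPerm_apply]
      exact humem (p.1, !p.2)
    · exact Or.inl (flipPerm.viaEmbedding_apply_of_notMem u x hx)
  have hbg := hb g hg
  obtain ⟨n, hn⟩ := ENNReal.exists_nat_gt hbg.ne
  have hle : (n : ℝ≥0∞) ≤ d (u (n, false)) (g (u (n, false))) := by
    have he : g (u (n, false)) = u (n, true) := by
      rw [hgu (n, false), flipPerm_apply]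
      rfl
    rw [he]
    show (n : ℝ≥0∞) ≤ d (a n) (b n)
    exact le_trans le_self_add (hdab n)
  exact absurd (hle.trans (le_iSup (fun β => d β (g β)) (u (n, false)))) hn.not_ge

end Aux

/-- Theorem 3.3. -/
theorem stmt2 {Ω : Type u} [Infinite Ω] (A : Set (Set Ω)) (hA : IsPartition A)
    (κ : Cardinal.{u}) (hreg : κ.IsRegular) (hκ : κ ≤ #Ω) :
    ((∃ s ∈ A, κ ≤ #s) →
      ¬ ∃ d : Ω → Ω → ℝ≥0∞, IsGenMetric d ∧ Uncrowded κ d ∧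
          ∀ g ∈ SAgrp A, BoundedPerm d g) ∧
    (((∀ s ∈ A, #s < κ) ∧ ¬ ∃ lam : Cardinal.{u}, lam < κ ∧ ∀ s ∈ A, #s ≤ lam) →
      (∃ d : Ω → Ω → ℝ≥0∞, IsGenMetric d ∧ Uncrowded κ d ∧
          ∀ g ∈ SAgrp A, BoundedPerm d g) ∧
      ¬ ∃ d : Ω → Ω → ℝ≥0∞, IsGenMetric d ∧ UnifUncrowded κ d ∧
          ∀ g ∈ SAgrp A, BoundedPerm d g) ∧
    ((∃ lam : Cardinal.{u}, lam < κ ∧ ∀ s ∈ A, #s ≤ lam) →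
      ∃ d : Ω → Ω → ℝ≥0∞, IsGenMetric d ∧ UnifUncrowded κ d ∧
          ∀ g ∈ SAgrp A, BoundedPerm d g) := by
  refine ⟨?_, ?_, ?_⟩
  · rintro ⟨s, hs, hκs⟩ ⟨d, hd, hunc, hbd⟩
    exact partA hd hA hunc hbd hs hκs
  · rintro ⟨hlt, hnb⟩
    constructor
    · refine ⟨dA A, dA_isGenMetric hA, ?_, fun g hg => dA_bounded hA hg⟩
      intro α r hr
      obtain ⟨s, hs, hα⟩ := exists_block hA α
      exact lt_of_le_of_lt
        (Cardinal.mk_le_mk_of_subset (gball_dA_subset hA hs hα hr)) (hlt s hs)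
    · rintro ⟨d, hd, hu, hbd⟩
      exact partB2 hd hA hlt hnb hu hbd
  · rintro ⟨lam, hlam, hbound⟩
    refine ⟨dA A, dA_isGenMetric hA, ?_, fun g hg => dA_bounded hA hg⟩
    intro r hr
    refine ⟨lam, hlam, fun α => ?_⟩
    obtain ⟨s, hs, hα⟩ := exists_block hA α
    exact (Cardinal.mk_le_mk_of_subset (gball_dA_subset hA hs hα hr)).trans (hbound s hs)
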